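/- arXiv:1704.03497 — 2 statements merged into one kernel-verified Lean document; each statement's English description precedes it below -/
import Mathlib

section
/- For f : ℝ × ℝ → ℝ twice continuously differentiable on [a,b] × [c,d] with a < b, c < d, and any (x,y) ∈ [a,b] × [c,d], the following Montgomery-type identity holds: f(x,y) - P(f)(x,y) = (1/4) Q(f)(x,y), where P(f)(x,y) = (1/2)[f(x,c) + f(x,d) + f(a,y) + f(b,y)] - (1/4)[f(a,c) + f(a,d) + f(b,c) + f(b,d)] and Q(f)(x,y) = ∫_a^x ∫_c^y ∂²f/∂s∂t ds dt - ∫_a^x ∫_y^d ∂²f/∂s∂t ds dt - ∫_x^b ∫_c^y ∂²f/∂s∂t ds dt + ∫_x^b ∫_y^d ∂²f/∂s∂t ds dt. -/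
open MeasureTheory Set

/-- Boundary-average functional `P(f)(x,y)` on the rectangle `[a,b] × [c,d]`. -/
noncomputable def Pbd (a b c d : ℝ) (h : ℝ → ℝ → ℝ) (x y : ℝ) : ℝ :=
  (1 / 2) * (h x c + h x d + h a y + h b y)
    - (1 / 4) * (h a c + h a d + h b c + h b d)

/-- `Q(F)(x,y)` where `F = D₂D₁f`: alternating sum of the four corner double integrals. -/
noncomputable def Qbd (a b c d : ℝ) (F : ℝ → ℝ → ℝ) (x y : ℝ) : ℝ :=
  (∫ t in a..x, ∫ s in c..y, F t s) - (∫ t in a..x, ∫ s in y..d, F t s)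
    - (∫ t in x..b, ∫ s in c..y, F t s) + (∫ t in x..b, ∫ s in y..d, F t s)

theorem montgomery_identity_double
    (a b c d : ℝ) (hab : a < b) (hcd : c < d)
    (f f1 F : ℝ → ℝ → ℝ)
    (hf1 : ∀ x ∈ Icc a b, ∀ y ∈ Icc c d, HasDerivAt (fun t => f t y) (f1 x y) x)
    (hf2 : ∀ x ∈ Icc a b, ∀ y ∈ Icc c d, HasDerivAt (fun s => f1 x s) (F x y) y)
    (hF : ContinuousOn (fun p : ℝ × ℝ => F p.1 p.2) (Icc a b ×ˢ Icc c d))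
    (x y : ℝ) (hx : x ∈ Icc a b) (hy : y ∈ Icc c d) :
    f x y - Pbd a b c d f x y = (1 / 4) * Qbd a b c d F x y := by
  -- Tietze extension of F to all of ℝ × ℝ
  set K : Set (ℝ × ℝ) := Icc a b ×ˢ Icc c d with hK
  have hKclosed : IsClosed K := (isClosed_Icc).prod isClosed_Icc
  obtain ⟨G, hG⟩ := ContinuousMap.exists_restrict_eq (Y := ℝ) hKclosed
    ⟨K.restrict (fun p : ℝ × ℝ => F p.1 p.2), hF.restrict⟩
  have hGeq : ∀ p ∈ K, G p = F p.1 p.2 := by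
    intro p hp
    have := congrFun (congrArg DFunLike.coe hG) ⟨p, hp⟩
    exact this
  have key : ∀ p ∈ Icc a b, ∀ q ∈ Icc a b, ∀ r ∈ Icc c d, ∀ w ∈ Icc c d,
      (∫ t in p..q, ∫ s in r..w, F t s) = (f q w - f q r) - (f p w - f p r) := by
    intro p hp q hq r hr w hw
    have hsubt : uIcc p q ⊆ Icc a b := uIcc_subset_Icc hp hq
    have hsubs : uIcc r w ⊆ Icc c d := uIcc_subset_Icc hr hw
    -- inner integral via FTC
    have inner : ∀ t ∈ Icc a b, (∫ s in r..w, F t s) = f1 t w - f1 t r := by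
      intro t ht
      refine intervalIntegral.integral_eq_sub_of_hasDerivAt
        (fun u hu => hf2 t ht u (hsubs hu)) ?_
      have hcont : ContinuousOn (fun s => F t s) (Icc c d) :=
        hF.comp (Continuous.continuousOn (continuous_const.prodMk continuous_id))
          (fun s hs => ⟨ht, hs⟩)
      exact (hcont.mono hsubs).intervalIntegrable
    -- replace F by G inside the double integral
    have hFG : (∫ t in p..q, ∫ s in r..w, F t s)
        = ∫ t in p..q, ∫ s in r..w, G (t, s) := by
      refine intervalIntegral.integral_congr (fun t ht => ?_)
      refine intervalIntegral.integral_congr (fun s hs => ?_)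
      exact (hGeq (t, s) ⟨hsubt ht, hsubs hs⟩).symm
    rw [hFG]
    have huncurry : Continuous (Function.uncurry fun t s => G (t, s)) := by
      show Continuous fun p : ℝ × ℝ => G (p.1, p.2)
      exact G.continuous.comp (continuous_fst.prodMk continuous_snd)
    have hGcont : Continuous (fun t : ℝ => ∫ s in r..w, G (t, s)) :=
      intervalIntegral.continuous_parametric_intervalIntegral_of_continuous'
        (μ := volume) huncurry r w
    refine intervalIntegral.integral_eq_sub_of_hasDerivAt (f := fun t => f t w - f t r) (fun t ht => ?_)
      (hGcont.intervalIntegrable p q)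
    have htI : t ∈ Icc a b := hsubt ht
    have hval : (∫ s in r..w, G (t, s)) = f1 t w - f1 t r := by
      rw [← inner t htI]
      refine intervalIntegral.integral_congr (fun s hs => ?_)
      exact hGeq (t, s) ⟨htI, hsubs hs⟩
    rw [hval]
    exact (hf1 t htI w hw).sub (hf1 t htI r hr)
  have ha : a ∈ Icc a b := ⟨le_refl a, le_of_lt hab⟩
  have hb : b ∈ Icc a b := ⟨le_of_lt hab, le_refl b⟩
  have hc : c ∈ Icc c d := ⟨le_refl c, le_of_lt hcd⟩
  have hd : d ∈ Icc c d := ⟨le_of_lt hcd, le_refl d⟩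
  have I1 := key a ha x hx c hc y hy
  have I2 := key a ha x hx y hy d hd
  have I3 := key x hx b hb c hc y hy
  have I4 := key x hx b hb y hy d hd
  unfold Qbd Pbd
  rw [I1, I2, I3, I4]
  ring
end

section
/- Let f : ℤ × ℤ → ℝ and let k, r ≥ 1 be integers. For 1 ≤ x ≤ k+1, 1 ≤ y ≤ r+1, the discrete Montgomery identity holds: f(x,y) - (1/2)[f(x,1) + f(x,r+1) + f(1,y) + f(k+1,y)] + (1/4)[f(1,1) + f(1,r+1) + f(k+1,1) + f(k+1,r+1)] = (1/4)[∑_{s=1}^{x-1} ∑_{t=1}^{y-1} Δ₂Δ₁f(s,t) - ∑_{s=1}^{x-1} ∑_{t=y}^{r} Δ₂Δ₁f(s,t) - ∑_{s=x}^{k} ∑_{t=1}^{y-1} Δ₂Δ₁f(s,t) + ∑_{s=x}^{k} ∑_{t=y}^{r} Δ₂Δ₁f(s,t)], where Δ₂Δ₁f(s,t) = f(s+1,t+1) - f(s+1,t) - f(s,t+1) + f(s,t). -/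
open Finset

/-- Mixed forward difference operator. -/
def dd (h : ℤ → ℤ → ℝ) (s t : ℤ) : ℝ :=
  h (s + 1) (t + 1) - h (s + 1) t - h s (t + 1) + h s t

lemma tele (g : ℤ → ℝ) (a b : ℤ) (hab : a ≤ b + 1) :
    ∑ s ∈ Icc a b, (g (s + 1) - g s) = g (b + 1) - g a := by
  refine Int.le_induction (m := a - 1)
    (motive := fun c _ => ∑ s ∈ Icc a c, (g (s + 1) - g s) = g (c + 1) - g a)
    ?_ (fun n hn ih => ?_) b (by omega)
  · simp [show a - 1 + 1 = a by ring, Icc_eq_empty_of_lt (by omega : a - 1 < a)]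
  · rw [show Icc a (n + 1) = insert (n + 1) (Icc a n) by
          ext z; simp only [Finset.mem_Icc, Finset.mem_insert]; omega,
        Finset.sum_insert (by simp only [Finset.mem_Icc]; omega), ih]
    ring

lemma box (f : ℤ → ℤ → ℝ) (a b c d : ℤ) (hab : a ≤ b + 1) (hcd : c ≤ d + 1) :
    ∑ s ∈ Icc a b, ∑ t ∈ Icc c d, dd f s t
      = f (b + 1) (d + 1) - f (b + 1) c - f a (d + 1) + f a c := by
  have : ∀ s : ℤ, ∑ t ∈ Icc c d, dd f s t
      = (f (s + 1) (d + 1) - f (s + 1) c) - (f s (d + 1) - f s c) := by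
    intro s
    have h := tele (fun t => f (s + 1) t - f s t) c d hcd
    simp only [dd]
    rw [Finset.sum_congr rfl (fun t _ => by ring :
      ∀ t ∈ Icc c d, f (s + 1) (t + 1) - f (s + 1) t - f s (t + 1) + f s t
        = f (s + 1) (t + 1) - f s (t + 1) - (f (s + 1) t - f s t)), h]
    ring
  simp only [this]
  have h := tele (fun s => f s (d + 1) - f s c) a b hab
  rw [h]; ring

theorem discrete_montgomery_identity
    (k r : ℤ) (hk : 1 ≤ k) (hr : 1 ≤ r) (f : ℤ → ℤ → ℝ)
    (x y : ℤ) (hx : 1 ≤ x ∧ x ≤ k + 1) (hy : 1 ≤ y ∧ y ≤ r + 1) :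
    f x y
        - (1 / 2) * (f x 1 + f x (r + 1) + f 1 y + f (k + 1) y)
        + (1 / 4) * (f 1 1 + f 1 (r + 1) + f (k + 1) 1 + f (k + 1) (r + 1))
      = (1 / 4) *
        ((∑ s ∈ Icc (1 : ℤ) (x - 1), ∑ t ∈ Icc (1 : ℤ) (y - 1), dd f s t)
          - (∑ s ∈ Icc (1 : ℤ) (x - 1), ∑ t ∈ Icc y r, dd f s t)
          - (∑ s ∈ Icc x k, ∑ t ∈ Icc (1 : ℤ) (y - 1), dd f s t)
          + (∑ s ∈ Icc x k, ∑ t ∈ Icc y r, dd f s t)) := by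
  obtain ⟨hx1, hx2⟩ := hx
  obtain ⟨hy1, hy2⟩ := hy
  rw [box f 1 (x - 1) 1 (y - 1) (by omega) (by omega),
      box f 1 (x - 1) y r (by omega) (by omega),
      box f x k 1 (y - 1) (by omega) (by omega),
      box f x k y r (by omega) (by omega)]
  rw [show x - 1 + 1 = x by ring, show y - 1 + 1 = y by ring]
  ring
end
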